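/- Let X be a real normed space equipped with its Borel σ-algebra, and let (μ_N) be a sequence of Borel probability measures on X converging weakly to a Borel probability measure μ, i.e., ∫ f dμ_N → ∫ f dμ for every bounded continuous f : X → ℝ. Let g_N, g : X → X be Borel measurable maps with g continuous, and suppose each μ_N is invariant under g_N, i.e., the pushforward of μ_N by g_N equals μ_N. Assume: (a) there is a function h : (0,∞) → ℝ with h(R) → 0 as R → ∞ and μ_N({x : ‖x‖ > R}) ≤ h(R) for all N and all R > 0; (b) for every R > 0, sup_{‖x‖ ≤ R} ‖g_N(x) − g(x)‖ → 0 as N → ∞. Then μ is invariant under g, i.e., the pushforward of μ by g equals μ. -/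

import Mathlib

open MeasureTheory Filter Metric NNReal

private lemma keyLip {X : Type*} [NormedAddCommGroup X] [MeasurableSpace X] [BorelSpace X]
    (μ : ℕ → Measure X) (μ₀ : Measure X)
    [∀ N, IsProbabilityMeasure (μ N)] [IsProbabilityMeasure μ₀]
    (hconv : ∀ f : BoundedContinuousFunction X ℝ,
      Filter.Tendsto (fun N => ∫ x, f x ∂(μ N)) Filter.atTop (nhds (∫ x, f x ∂μ₀)))
    (g : X → X) (gN : ℕ → X → X)
    (hg : Continuous g) (hgN : ∀ N, Measurable (gN N))
    (hinv : ∀ N, (μ N).map (gN N) = μ N)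
    (h : ℝ → ℝ) (hh : Filter.Tendsto h Filter.atTop (nhds 0))
    (htail : ∀ N : ℕ, ∀ R : ℝ, 0 < R → μ N {x : X | R < ‖x‖} ≤ ENNReal.ofReal (h R))
    (hunif : ∀ R : ℝ, 0 < R → ∀ ε : ℝ, 0 < ε → ∃ N₀ : ℕ, ∀ N ≥ N₀,
      ∀ x : X, ‖x‖ ≤ R → ‖gN N x - g x‖ ≤ ε)
    (f : X → ℝ) (L : ℝ≥0) (hf : LipschitzWith L f) (C : ℝ) (hC : 0 ≤ C)
    (hfb : ∀ x, |f x| ≤ C) :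
    ∫ x, f (g x) ∂μ₀ = ∫ x, f x ∂μ₀ := by
  have hfc : Continuous f := hf.continuous
  set F : BoundedContinuousFunction X ℝ :=
    BoundedContinuousFunction.ofNormedAddCommGroup f hfc C
      (fun x => by simpa [Real.norm_eq_abs] using hfb x) with hF
  have h1 : Tendsto (fun N => ∫ x, f x ∂(μ N)) atTop (nhds (∫ x, f x ∂μ₀)) := hconv F
  have h2 : Tendsto (fun N => ∫ x, f (g x) ∂(μ N)) atTop (nhds (∫ x, f (g x) ∂μ₀)) :=
    hconv (F.compContinuous ⟨g, hg⟩)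
  have h3 : ∀ N, ∫ x, f x ∂(μ N) = ∫ x, f (gN N x) ∂(μ N) := by
    intro N
    conv_lhs => rw [← hinv N]
    exact integral_map (hgN N).aemeasurable hfc.aestronglyMeasurable
  have intgN : ∀ N, Integrable (fun x => f (gN N x)) (μ N) := fun N =>
    ⟨(hfc.measurable.comp (hgN N)).aestronglyMeasurable,
      HasFiniteIntegral.of_bounded (C := C)
        (ae_of_all _ fun x => by simpa [Real.norm_eq_abs] using hfb (gN N x))⟩
  have intg : ∀ N, Integrable (fun x => f (g x)) (μ N) := fun N =>
    ⟨(hfc.comp hg).aestronglyMeasurable,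
      HasFiniteIntegral.of_bounded (C := C)
        (ae_of_all _ fun x => by simpa [Real.norm_eq_abs] using hfb (g x))⟩
  have h4 : Tendsto (fun N => ∫ x, f (gN N x) ∂(μ N) - ∫ x, f (g x) ∂(μ N)) atTop (nhds 0) := by
    rw [Metric.tendsto_atTop]
    intro η hη
    have hC1 : (0:ℝ) < 4 * (C + 1) := by linarith
    obtain ⟨R₀, hR₀⟩ := (Metric.tendsto_atTop.mp hh) (η / (4 * (C + 1))) (div_pos hη hC1)
    set R : ℝ := max R₀ 1 with hRdef
    have hRpos : 0 < R := lt_of_lt_of_le one_pos (le_max_right _ _)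
    have hhR : |h R| < η / (4 * (C + 1)) := by
      have := hR₀ R (le_max_left _ _)
      simpa [Real.dist_eq] using this
    set ε : ℝ := η / (4 * ((L : ℝ) + 1)) with hεdef
    have hεpos : 0 < ε := div_pos hη (by positivity)
    obtain ⟨N₀, hN₀⟩ := hunif R hRpos ε hεpos
    refine ⟨N₀, fun N hN => ?_⟩
    rw [Real.dist_0_eq_abs]
    set s : Set X := {x : X | R < ‖x‖} with hs
    have smeas : MeasurableSet s := (isOpen_lt continuous_const continuous_norm).measurableSet
    set b : X → ℝ := fun x => (L : ℝ) * ε + s.indicator (fun _ => 2 * C) x with hb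
    have intb : Integrable b (μ N) :=
      (integrable_const _).add ((integrable_const (2 * C)).indicator smeas)
    have hpt : ∀ x, |f (gN N x) - f (g x)| ≤ b x := by
      intro x
      by_cases hx : ‖x‖ ≤ R
      · have hd : |f (gN N x) - f (g x)| ≤ (L : ℝ) * ‖gN N x - g x‖ := by
          simpa [Real.dist_eq, dist_eq_norm] using hf.dist_le_mul (gN N x) (g x)
        have : |f (gN N x) - f (g x)| ≤ (L : ℝ) * ε :=
          hd.trans (mul_le_mul_of_nonneg_left (hN₀ N hN x hx) L.coe_nonneg)
        have hxs : x ∉ s := by simp [hs]; linarith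
        simpa [hb, Set.indicator_of_notMem hxs] using this
      · have hxs : x ∈ s := by simp [hs]; linarith
        have : |f (gN N x) - f (g x)| ≤ 2 * C := by
          calc |f (gN N x) - f (g x)| ≤ |f (gN N x)| + |f (g x)| := abs_sub _ _
            _ ≤ 2 * C := by linarith [hfb (gN N x), hfb (g x)]
        have hLε : 0 ≤ (L : ℝ) * ε := mul_nonneg L.coe_nonneg hεpos.le
        simp only [hb, Set.indicator_of_mem hxs]
        linarith
    have step1 : |∫ x, f (gN N x) ∂(μ N) - ∫ x, f (g x) ∂(μ N)| ≤ ∫ x, b x ∂(μ N) := by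
      rw [← integral_sub (intgN N) (intg N)]
      calc |∫ x, (f (gN N x) - f (g x)) ∂(μ N)|
          ≤ ∫ x, |f (gN N x) - f (g x)| ∂(μ N) := by
            simpa [Real.norm_eq_abs] using norm_integral_le_integral_norm
              (μ := μ N) (f := fun x => f (gN N x) - f (g x))
        _ ≤ ∫ x, b x ∂(μ N) := integral_mono ((intgN N).sub (intg N)).abs intb hpt
    have step2 : ∫ x, b x ∂(μ N) = (L : ℝ) * ε + ((μ N) s).toReal * (2 * C) := by
      rw [hb, integral_add (integrable_const _) ((integrable_const (2 * C)).indicator smeas),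
        integral_const, integral_indicator_const _ smeas]
      simp
      exact Or.inl rfl
    have hμs : ((μ N) s).toReal ≤ |h R| := by
      refine ENNReal.toReal_le_of_le_ofReal (abs_nonneg _) ?_
      exact (htail N R hRpos).trans (ENNReal.ofReal_le_ofReal (le_abs_self _))
    have step3 : ((μ N) s).toReal * (2 * C) ≤ η / 2 := by
      have h0 : 0 ≤ ((μ N) s).toReal := ENNReal.toReal_nonneg
      have : ((μ N) s).toReal * (2 * C) ≤ |h R| * (2 * C) :=
        mul_le_mul_of_nonneg_right hμs (by linarith)
      refine this.trans ?_
      have h7 := hhR.le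
      rw [le_div_iff₀ hC1] at h7
      nlinarith [abs_nonneg (h R), hC]
    have step4 : (L : ℝ) * ε ≤ η / 4 := by
      have hL : (0:ℝ) ≤ (L : ℝ) := L.coe_nonneg
      have h4L : (0:ℝ) < 4 * ((L:ℝ) + 1) := by positivity
      rw [hεdef, ← mul_div_assoc, div_le_div_iff₀ h4L (by norm_num : (0:ℝ) < 4)]
      nlinarith
    calc |∫ x, f (gN N x) ∂(μ N) - ∫ x, f (g x) ∂(μ N)| ≤ ∫ x, b x ∂(μ N) := step1
      _ = (L : ℝ) * ε + ((μ N) s).toReal * (2 * C) := step2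
      _ ≤ η / 4 + η / 2 := add_le_add step4 step3
      _ < η := by linarith
  have h5 : Tendsto (fun N => ∫ x, f (gN N x) ∂(μ N)) atTop (nhds (∫ x, f (g x) ∂μ₀)) := by
    have := h4.add h2
    simpa using this
  have h6 : Tendsto (fun N => ∫ x, f x ∂(μ N)) atTop (nhds (∫ x, f (g x) ∂μ₀)) := by
    simpa only [← h3] using h5
  exact (tendsto_nhds_unique h6 h1)


/-- Abstract commutative-diagram argument: weak limits of invariant measures of maps
`g_N` converging to `g` uniformly on balls, with a uniform tail bound, are invariant
under `g`. -/
theorem stmt11 {X : Type*} [NormedAddCommGroup X] [MeasurableSpace X] [BorelSpace X]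
    (μ : ℕ → Measure X) (μ₀ : Measure X)
    [∀ N, IsProbabilityMeasure (μ N)] [IsProbabilityMeasure μ₀]
    (hconv : ∀ f : BoundedContinuousFunction X ℝ,
      Filter.Tendsto (fun N => ∫ x, f x ∂(μ N)) Filter.atTop (nhds (∫ x, f x ∂μ₀)))
    (g : X → X) (gN : ℕ → X → X)
    (hg : Continuous g) (hgN : ∀ N, Measurable (gN N))
    (hinv : ∀ N, (μ N).map (gN N) = μ N)
    (h : ℝ → ℝ) (hh : Filter.Tendsto h Filter.atTop (nhds 0))
    (htail : ∀ N : ℕ, ∀ R : ℝ, 0 < R → μ N {x : X | R < ‖x‖} ≤ ENNReal.ofReal (h R))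
    (hunif : ∀ R : ℝ, 0 < R → ∀ ε : ℝ, 0 < ε → ∃ N₀ : ℕ, ∀ N ≥ N₀,
      ∀ x : X, ‖x‖ ≤ R → ‖gN N x - g x‖ ≤ ε) :
    μ₀.map g = μ₀ := by
  have hmg : AEMeasurable g μ₀ := hg.measurable.aemeasurable
  have hprob : IsProbabilityMeasure (μ₀.map g) := Measure.isProbabilityMeasure_map hmg
  have key : ∀ F : Set X, IsClosed F → (μ₀.map g) F = μ₀ F := by
    intro F hF
    rcases F.eq_empty_or_nonempty with rfl | hne
    · simp
    set fseq : ℕ → X → ℝ := fun n x => max (1 - n * infDist x F) 0 with hfseq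
    have hlip : ∀ n : ℕ, LipschitzWith ((n : ℝ≥0) * 1) (fseq n) := by
      intro n
      have lout : LipschitzWith (n : ℝ≥0) (fun t : ℝ => max (1 - (n : ℝ) * t) 0) := by
        apply LipschitzWith.of_dist_le_mul
        intro a b
        have h1 : dist (max (1 - (n:ℝ)*a) 0) (max (1 - (n:ℝ)*b) 0)
            ≤ dist (1 - (n:ℝ)*a) (1 - (n:ℝ)*b) := by
          simp only [Real.dist_eq]
          exact abs_max_sub_max_le_abs _ _ _
        refine h1.trans ?_
        simp only [Real.dist_eq]
        rw [show (1 - (n:ℝ)*a) - (1 - (n:ℝ)*b) = (n:ℝ) * (b - a) by ring, abs_mul]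
        rw [abs_of_nonneg (by positivity : (0:ℝ) ≤ (n:ℝ)), abs_sub_comm]
        simp
      exact lout.comp (lipschitz_infDist_pt F)
    have hbd : ∀ n x, |fseq n x| ≤ 1 := by
      intro n x
      rw [abs_le]
      constructor
      · have : (0:ℝ) ≤ max (1 - n * infDist x F) 0 := le_max_right _ _
        linarith
      · apply max_le _ one_pos.le
        have := infDist_nonneg (s := F) (x := x)
        have : (0:ℝ) ≤ (n:ℝ) * infDist x F := by positivity
        linarith
    have eqn : ∀ n, ∫ x, fseq n (g x) ∂μ₀ = ∫ x, fseq n x ∂μ₀ := fun n =>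
      keyLip μ μ₀ hconv g gN hg hgN hinv h hh htail hunif (fseq n) _ (hlip n) 1
        one_pos.le (hbd n)
    have hptlim : ∀ x, Filter.Tendsto (fun n => fseq n x) Filter.atTop
        (nhds (F.indicator (fun _ => (1:ℝ)) x)) := by
      intro x
      by_cases hx : x ∈ F
      · have hd : infDist x F = 0 := infDist_zero_of_mem hx
        simp only [hfseq, hd, mul_zero, sub_zero, Set.indicator_of_mem hx]
        simp only [max_eq_left one_pos.le]; exact tendsto_const_nhds
      · have hd : 0 < infDist x F := (hF.notMem_iff_infDist_pos hne).1 hx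
        rw [Set.indicator_of_notMem hx]
        obtain ⟨n₀, hn₀⟩ := exists_nat_ge (1 / infDist x F)
        apply Filter.Tendsto.congr' (f₁ := fun _ => (0:ℝ))
        · filter_upwards [Filter.eventually_ge_atTop n₀] with n hn
          have h1 : 1 / infDist x F ≤ (n : ℝ) := hn₀.trans (by exact_mod_cast hn)
          have h2 : (1:ℝ) ≤ (n : ℝ) * infDist x F := by
            rw [div_le_iff₀ hd] at h1
            linarith
          simp only [hfseq]
          rw [max_eq_right (by linarith)]
        · exact tendsto_const_nhds
      
    have hmeas : ∀ n, Continuous (fseq n) := fun n => (hlip n).continuous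
    have dct : ∀ (ν : Measure X), IsProbabilityMeasure ν →
        Filter.Tendsto (fun n => ∫ x, fseq n x ∂ν) Filter.atTop (nhds ((ν F).toReal)) := by
      intro ν hν
      have := tendsto_integral_of_dominated_convergence (μ := ν)
        (F := fun n x => fseq n x) (f := F.indicator (fun _ => (1:ℝ)))
        (bound := fun _ => (1:ℝ))
        (fun n => (hmeas n).aestronglyMeasurable)
        (integrable_const 1)
        (fun n => ae_of_all _ fun x => by simpa [Real.norm_eq_abs] using hbd n x)
        (ae_of_all _ hptlim)
      rwa [integral_indicator_const _ hF.measurableSet, smul_eq_mul, mul_one] at this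
    have lim1 : Filter.Tendsto (fun n => ∫ x, fseq n x ∂μ₀) Filter.atTop
        (nhds ((μ₀ F).toReal)) := dct μ₀ inferInstance
    have lim2 : Filter.Tendsto (fun n => ∫ x, fseq n x ∂(μ₀.map g)) Filter.atTop
        (nhds (((μ₀.map g) F).toReal)) := dct (μ₀.map g) hprob
    have heq : ∀ n, ∫ x, fseq n x ∂(μ₀.map g) = ∫ x, fseq n x ∂μ₀ := by
      intro n
      rw [integral_map hmg (hmeas n).aestronglyMeasurable]
      exact eqn n
    have : ((μ₀.map g) F).toReal = (μ₀ F).toReal := by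
      refine tendsto_nhds_unique ?_ lim1
      simpa only [heq] using lim2
    exact (ENNReal.toReal_eq_toReal_iff' (measure_ne_top _ _) (measure_ne_top _ _)).1 this
  have : IsFiniteMeasure (μ₀.map g) := by exact inferInstance
  refine ext_of_generate_finite {s : Set X | IsClosed s} ?_ isPiSystem_isClosed
    (fun s hs => key s hs) ?_
  · rw [BorelSpace.measurable_eq (α := X), borel_eq_generateFrom_isClosed]
  · simp [hprob.measure_univ]
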